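/- Let μ > 0, F ∈ ℝ², and 0 < a < b. Let u_δ(x) = (1/(4πμ))·(−ln|x|·F + ((x·F)/|x|²)·x) be the 2D Stokeslet velocity, and let χ̃(x) = χ(|x|) with χ(r) = (2r³ − 3(a+b)r² + 6abr + b²(b−3a))/(b−a)³ for a ≤ r ≤ b. Then for every x ∈ ℝ² with a < |x| < b, writing r = |x|: div(χ̃·u_δ)(x) = [3(1 − ln r)(r² − (a+b)r + ab) / (2πμ(b−a)³ r)] · (x·F). -/

import Mathlib

open Real MeasureTheory

noncomputable section

/-- Euclidean inner product on `Fin d → ℝ`. -/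
def dot {d : ℕ} (x y : Fin d → ℝ) : ℝ := ∑ i, x i * y i

/-- Euclidean norm on `Fin d → ℝ`. -/
def eunorm {d : ℕ} (x : Fin d → ℝ) : ℝ := Real.sqrt (∑ i, (x i) ^ 2)

/-- `i`-th partial derivative of a scalar field. -/
def pd {d : ℕ} (i : Fin d) (f : (Fin d → ℝ) → ℝ) (x : Fin d → ℝ) : ℝ :=
  fderiv ℝ f x (Pi.single i 1)

/-- Laplacian (sum of second partial derivatives) of a scalar field. -/
def lap {d : ℕ} (f : (Fin d → ℝ) → ℝ) (x : Fin d → ℝ) : ℝ :=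
  ∑ i, pd i (fun y => pd i f y) x

/-- Divergence of a vector field. -/
def divg {d : ℕ} (u : (Fin d → ℝ) → (Fin d → ℝ)) (x : Fin d → ℝ) : ℝ :=
  ∑ i, pd i (fun y => u y i) x

/-- 2D Stokeslet velocity. -/
def udelta2 (μ : ℝ) (F : Fin 2 → ℝ) (x : Fin 2 → ℝ) : Fin 2 → ℝ :=
  fun j => (1 / (4 * π * μ)) *
    ((- Real.log (eunorm x)) * F j + (dot x F / (eunorm x) ^ 2) * x j)

/-- The radial cubic cutoff profile: `1` for `r ≤ a`, a cubic polynomial on `[a, b]`,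
and `0` for `r ≥ b`. -/
def cutoff (a b r : ℝ) : ℝ :=
  if r ≤ a then 1
  else if r ≤ b then
    (2 * r ^ 3 - 3 * (a + b) * r ^ 2 + 6 * a * b * r + b ^ 2 * (b - 3 * a)) / (b - a) ^ 3
  else 0

set_option maxHeartbeats 2000000 in
private theorem aux_div_truncated_stokeslet2d (μ : ℝ) (hμ : 0 < μ) (F : Fin 2 → ℝ)
    (a b : ℝ) (ha : 0 < a) (hab : a < b)
    (x : Fin 2 → ℝ) (hxa : a < eunorm x) (hxb : eunorm x < b) :
    divg (fun y j => cutoff a b (eunorm y) * udelta2 μ F y j) x =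
      (3 * (1 - Real.log (eunorm x)) * ((eunorm x) ^ 2 - (a + b) * eunorm x + a * b) /
        (2 * π * μ * (b - a) ^ 3 * eunorm x)) * dot x F := by
  have hr : 0 < eunorm x := ha.trans hxa
  have hπ : (π : ℝ) ≠ 0 := Real.pi_ne_zero
  have hba : b - a ≠ 0 := sub_ne_zero.mpr hab.ne'
  have heu : ∀ y : Fin 2 → ℝ, eunorm y = Real.sqrt (y 0 * y 0 + y 1 * y 1) := by
    intro y; unfold eunorm; rw [Fin.sum_univ_two]; ring_nf
  have hNnn : ∀ y : Fin 2 → ℝ, 0 ≤ y 0 * y 0 + y 1 * y 1 := by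
    intro y; nlinarith [sq_nonneg (y 0), sq_nonneg (y 1)]
  have hNpos : 0 < x 0 * x 0 + x 1 * x 1 := by
    have := heu x ▸ hr; exact Real.sqrt_pos.mp this
  -- eventual equality with the smooth representative
  have hev : ∀ i : Fin 2,
      (fun y => cutoff a b (eunorm y) * udelta2 μ F y i) =ᶠ[nhds x]
      (fun y => (((b - a) ^ 3)⁻¹ *
          (2 * Real.sqrt (y 0 * y 0 + y 1 * y 1) ^ 3
            - 3 * (a + b) * Real.sqrt (y 0 * y 0 + y 1 * y 1) ^ 2
            + 6 * (a * b) * Real.sqrt (y 0 * y 0 + y 1 * y 1) + b ^ 2 * (b - 3 * a))) *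
        ((4 * π * μ)⁻¹ *
          ((-(2⁻¹ * Real.log (y 0 * y 0 + y 1 * y 1))) * F i
            + ((y 0 * F 0 + y 1 * F 1) * (y 0 * y 0 + y 1 * y 1)⁻¹) * y i))) := by
    intro i
    have hcont : Continuous (eunorm (d := 2)) := by
      unfold eunorm; exact Real.continuous_sqrt.comp (by continuity)
    have hopen : IsOpen {y : Fin 2 → ℝ | a < eunorm y ∧ eunorm y < b} :=
      (isOpen_Ioo (a := a) (b := b)).preimage hcont
    filter_upwards [hopen.mem_nhds ⟨hxa, hxb⟩] with y hy
    obtain ⟨hy1, hy2⟩ := hy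
    have hry : 0 < eunorm y := ha.trans hy1
    have hNy : 0 < y 0 * y 0 + y 1 * y 1 := Real.sqrt_pos.mp (heu y ▸ hry)
    have h1 : cutoff a b (eunorm y)
        = (2 * eunorm y ^ 3 - 3 * (a + b) * eunorm y ^ 2 + 6 * a * b * eunorm y
            + b ^ 2 * (b - 3 * a)) / (b - a) ^ 3 := by
      rw [cutoff, if_neg (not_le.mpr hy1), if_pos hy2.le]
    have hlogy : Real.log (eunorm y) = 2⁻¹ * Real.log (y 0 * y 0 + y 1 * y 1) := by
      rw [heu y, Real.log_sqrt (hNnn y)]; ring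
    have hsq : eunorm y ^ 2 = y 0 * y 0 + y 1 * y 1 := by
      rw [heu y]; exact Real.sq_sqrt (hNnn y)
    have hdoty : dot y F = y 0 * F 0 + y 1 * F 1 := by
      simp [dot, Fin.sum_univ_two]
    rw [h1, udelta2, hdoty, hlogy, hsq, heu y]
    have hmu' : μ ≠ 0 := hμ.ne'
    field_simp
    ring_nf
    rw [Real.sq_sqrt (by positivity)]
    ring

  -- derivatives
  have h0 := hasFDerivAt_apply (𝕜 := ℝ) (0 : Fin 2) x
  have h1 := hasFDerivAt_apply (𝕜 := ℝ) (1 : Fin 2) x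
  have hN := (h0.mul h0).add (h1.mul h1)
  have hsqrt := (Real.hasDerivAt_sqrt hNpos.ne').comp_hasFDerivAt x hN
  have hlogN := (Real.hasDerivAt_log hNpos.ne').comp_hasFDerivAt x hN
  have hinvN := (hasDerivAt_inv hNpos.ne').comp_hasFDerivAt x hN
  have hQ : HasDerivAt
      (fun s : ℝ => ((b - a) ^ 3)⁻¹ *
        (2 * s ^ 3 - 3 * (a + b) * s ^ 2 + 6 * (a * b) * s + b ^ 2 * (b - 3 * a)))
      (((b - a) ^ 3)⁻¹ * (2 * (3 * Real.sqrt (x 0 * x 0 + x 1 * x 1) ^ 2)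
        - 3 * (a + b) * (2 * Real.sqrt (x 0 * x 0 + x 1 * x 1)) + 6 * (a * b)))
      (Real.sqrt (x 0 * x 0 + x 1 * x 1)) := by
    have hp3 : HasDerivAt (fun s : ℝ => s ^ 3) (3 * Real.sqrt (x 0 * x 0 + x 1 * x 1) ^ 2)
        (Real.sqrt (x 0 * x 0 + x 1 * x 1)) := by
      simpa using hasDerivAt_pow 3 (Real.sqrt (x 0 * x 0 + x 1 * x 1))
    have hp2 : HasDerivAt (fun s : ℝ => s ^ 2) (2 * Real.sqrt (x 0 * x 0 + x 1 * x 1))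
        (Real.sqrt (x 0 * x 0 + x 1 * x 1)) := by
      simpa using hasDerivAt_pow 2 (Real.sqrt (x 0 * x 0 + x 1 * x 1))
    have h := ((((hp3.const_mul (2:ℝ)).sub (hp2.const_mul (3 * (a + b)))).add
      ((hasDerivAt_id (Real.sqrt (x 0 * x 0 + x 1 * x 1))).const_mul (6 * (a * b)))).add_const
      (b ^ 2 * (b - 3 * a))).const_mul ((b - a) ^ 3)⁻¹
    exact h.congr_deriv (by ring)
  have hP := hQ.comp_hasFDerivAt x hsqrt
  have hU := fun i : Fin 2 =>
    ((((hlogN.const_mul (2:ℝ)⁻¹).neg).mul_const (F i)).add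
      ((((h0.mul_const (F 0)).add (h1.mul_const (F 1))).mul hinvN).mul
        (hasFDerivAt_apply (𝕜 := ℝ) i x))).const_mul (4 * π * μ)⁻¹
  have hg := fun i : Fin 2 => hP.mul (hU i)
  have d := fun i : Fin 2 => ((hev i).fderiv_eq).trans (hg i).fderiv
  simp only [divg, pd, Fin.sum_univ_two]
  rw [d 0, d 1]
  simp only [ContinuousLinearMap.add_apply, ContinuousLinearMap.smul_apply,
    ContinuousLinearMap.coe_smul', Pi.smul_apply, ContinuousLinearMap.proj_apply,
    ContinuousLinearMap.sub_apply, ContinuousLinearMap.neg_apply,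
    ContinuousLinearMap.smulRight_apply, ContinuousLinearMap.coe_sub',
    Pi.sub_apply, smul_eq_mul, Pi.single_eq_same, Function.comp_apply,
    ne_eq, Pi.single_eq_of_ne, one_ne_zero, zero_ne_one, Fin.isValue, Pi.mul_apply, Pi.add_apply,
    Pi.neg_apply]
  have e1 : (Pi.single 0 1 : Fin 2 → ℝ) 1 = 0 := Pi.single_eq_of_ne (show (1:Fin 2) ≠ 0 by decide) 1
  have e2 : (Pi.single 1 1 : Fin 2 → ℝ) 0 = 0 := Pi.single_eq_of_ne (show (0:Fin 2) ≠ 1 by decide) 1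
  simp only [e1, e2]
  have hdotx : dot x F = x 0 * F 0 + x 1 * F 1 := by simp [dot, Fin.sum_univ_two]
  have hlogNx : Real.log (x 0 * x 0 + x 1 * x 1)
      = 2 * Real.log (Real.sqrt (x 0 * x 0 + x 1 * x 1)) := by
    rw [Real.log_sqrt (hNnn x)]; ring
  rw [heu x, hdotx, hlogNx]
  set r := Real.sqrt (x 0 * x 0 + x 1 * x 1) with hrdef
  have hs2 : x 0 * x 0 + x 1 * x 1 = r ^ 2 := (Real.sq_sqrt (hNnn x)).symm
  have hrpos : 0 < r := by rw [hrdef, ← heu x]; exact hr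
  rw [hs2]
  have hmu : μ ≠ 0 := hμ.ne'
  field_simp
  linear_combination ((2 * r * (6 * r * (r - (a + b)) + 6 * a * b)
    - 4 * (r * (r * (2 * r - 3 * (a + b)) + b * a * 6) + b ^ 2 * (b - a * 3)))
    * (x 0 * F 0 + x 1 * F 1)) * hs2


/-- Divergence of the truncated 2D Stokeslet velocity `u₀ = χ̃ u_δ` on the annulus
`a < |x| < b`. -/
theorem div_truncated_stokeslet2d (μ : ℝ) (hμ : 0 < μ) (F : Fin 2 → ℝ)
    (a b : ℝ) (ha : 0 < a) (hab : a < b)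
    (x : Fin 2 → ℝ) (hxa : a < eunorm x) (hxb : eunorm x < b) :
    divg (fun y j => cutoff a b (eunorm y) * udelta2 μ F y j) x =
      (3 * (1 - Real.log (eunorm x)) * ((eunorm x) ^ 2 - (a + b) * eunorm x + a * b) /
        (2 * π * μ * (b - a) ^ 3 * eunorm x)) * dot x F := by
  exact aux_div_truncated_stokeslet2d μ hμ F a b ha hab x hxa hxb
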